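/- Let C ⊆ SL(n+1,ℝ) be compact and θ ∈ (0,1). Then there exists ε₀ > 0 such that for all 0 < ε ≤ ε₀, the sets H_ε(a) = {M ∈ SL(n+1,ℝ) : aM ∈ C_{θ,ε}}, indexed by primitive vectors a ∈ ℤ^{n+1}, are pairwise disjoint on the set Γ·C (products γC with γ ∈ SL(n+1,ℤ), C ∈ C). That is, for M ∈ Γ·C, at most one primitive vector a satisfies aM ∈ C_{θ,ε}. -/

import Mathlib

open Matrix

noncomputable section

abbrev SL (m : ℕ) (R : Type) [CommRing R] := Matrix.SpecialLinearGroup (Fin m) R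

def lastVec (n : ℕ) (R : Type) [CommRing R] : Fin (n+1) → R := Pi.single (Fin.last n) 1

def Primitive {n : ℕ} (a : Fin (n+1) → ℤ) : Prop := Finset.univ.gcd a = 1

/-- The stabilizer of the row vector (0,...,0,1) under right multiplication. -/
def stab (n : ℕ) (R : Type) [CommRing R] : Subgroup (SL (n+1) R) where
  carrier := {γ | Matrix.vecMul (lastVec n R) (γ : Matrix (Fin (n+1)) (Fin (n+1)) R) = lastVec n R}
  one_mem' := by simp
  mul_mem' := by
    intro a b ha hb
    simp only [Set.mem_setOf_eq] at *
    rw [Matrix.SpecialLinearGroup.coe_mul, ← Matrix.vecMul_vecMul, ha, hb]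
  inv_mem' := by
    intro a ha
    simp only [Set.mem_setOf_eq] at *
    conv_lhs => rw [← ha]
    rw [Matrix.vecMul_vecMul, ← Matrix.SpecialLinearGroup.coe_mul, mul_inv_cancel,
      Matrix.SpecialLinearGroup.coe_one, Matrix.vecMul_one]

/-- The diagonal matrix a(y) = diag(y^{1/n} I_n, y⁻¹). -/
def aMat (n : ℕ) (y : ℝ) : Matrix (Fin (n+1)) (Fin (n+1)) ℝ :=
  Matrix.diagonal (fun i => if i = Fin.last n then y⁻¹ else y ^ ((n : ℝ)⁻¹))

/-- The unipotent matrix h(x), with bottom-left row −x. -/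
def hMat {n : ℕ} (x : Fin n → ℝ) : Matrix (Fin (n+1)) (Fin (n+1)) ℝ :=
  fun i j => if i = j then 1 else
    if i = Fin.last n then (if hj : j = Fin.last n then 0 else -x (j.castPred hj)) else 0

/-- The unipotent integer matrix u(x). -/
def uMat {n : ℕ} (x : Fin n → ℤ) : Matrix (Fin (n+1)) (Fin (n+1)) ℤ :=
  fun i j => if i = j then 1 else
    if i = Fin.last n then (if hj : j = Fin.last n then 0 else x (j.castPred hj)) else 0

/-- The Euclidean norm on ℝ^n. -/
def euclidEnorm {n : ℕ} (v : Fin n → ℝ) : ℝ := Real.sqrt (∑ i, (v i)^2)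

abbrev mapSL (n : ℕ) : SL (n+1) ℤ →* SL (n+1) ℝ :=
  Matrix.SpecialLinearGroup.map (Int.castRingHom ℝ)

instance (m : ℕ) : TopologicalSpace (SL m ℝ) :=
  TopologicalSpace.induced (fun A => (A : Matrix (Fin m) (Fin m) ℝ)) inferInstance


section Aux

lemma enorm_coord {n : ℕ} (v : Fin n → ℝ) (j : Fin n) : |v j| ≤ euclidEnorm v := by
  rw [euclidEnorm, ← Real.sqrt_sq_eq_abs]
  exact Real.sqrt_le_sqrt (Finset.single_le_sum
    (f := fun i => (v i) ^ 2) (fun i _ => sq_nonneg _) (Finset.mem_univ j))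

lemma gcd_eq_one_of_dvd_one {m : ℕ} {p : Fin m → ℤ} (h : Finset.univ.gcd p ∣ 1) :
    Finset.univ.gcd p = 1 := by
  rcases Int.isUnit_iff.mp (isUnit_of_dvd_one h) with h1 | h1
  · exact h1
  · have hn := Finset.normalize_gcd (s := (Finset.univ : Finset (Fin m))) (f := p)
    rw [h1, Int.normalize_of_nonpos (by norm_num : (-1:ℤ) ≤ 0)] at hn
    norm_num at hn

lemma vecMul_gamma_cancel {n : ℕ} (γ : SL (n+1) ℤ) (v : Fin (n+1) → ℤ) :
    Matrix.vecMul (Matrix.vecMul v (γ : Matrix (Fin (n+1)) (Fin (n+1)) ℤ))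
      ((γ⁻¹ : SL (n+1) ℤ) : Matrix (Fin (n+1)) (Fin (n+1)) ℤ) = v := by
  rw [Matrix.vecMul_vecMul, ← Matrix.SpecialLinearGroup.coe_mul, mul_inv_cancel,
    Matrix.SpecialLinearGroup.coe_one, Matrix.vecMul_one]

lemma primitive_vecMul {n : ℕ} (γ : SL (n+1) ℤ) {a : Fin (n+1) → ℤ} (ha : Primitive a) :
    Primitive (Matrix.vecMul a (γ : Matrix (Fin (n+1)) (Fin (n+1)) ℤ)) := by
  set p := Matrix.vecMul a (γ : Matrix (Fin (n+1)) (Fin (n+1)) ℤ) with hp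
  have hap : Matrix.vecMul p ((γ⁻¹ : SL (n+1) ℤ) : Matrix (Fin (n+1)) (Fin (n+1)) ℤ) = a :=
    vecMul_gamma_cancel γ a
  have hdvd : Finset.univ.gcd p ∣ 1 := by
    rw [show (1 : ℤ) = Finset.univ.gcd a from ha.symm]
    refine Finset.dvd_gcd fun i _ => ?_
    rw [← hap]
    show Finset.univ.gcd p ∣ Matrix.vecMul p _ i
    simp only [Matrix.vecMul, dotProduct]
    exact Finset.dvd_sum fun j _ => Dvd.dvd.mul_right (Finset.gcd_dvd (Finset.mem_univ j)) _
  exact gcd_eq_one_of_dvd_one hdvd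

end Aux

/-- For a compact C ⊆ SL(n+1,ℝ) and θ ∈ (0,1), there is ε₀ > 0 such that for all
0 < ε ≤ ε₀ and M ∈ Γ·C, at most one primitive vector a satisfies aM ∈ C_{θ,ε}. -/
theorem stmt15 (n : ℕ) (hn : 1 ≤ n) (C : Set (SL (n+1) ℝ)) (hC : IsCompact C)
    (θ : ℝ) (hθ : 0 < θ) (hθ1 : θ < 1) :
    ∃ ε₀ > 0, ∀ ε : ℝ, 0 < ε → ε ≤ ε₀ →
      ∀ M : SL (n+1) ℝ, (∃ γ : SL (n+1) ℤ, ∃ c ∈ C, M = mapSL n γ * c) →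
      ∀ a b : Fin (n+1) → ℤ, Primitive a → Primitive b →
        (let va : Fin (n+1) → ℝ :=
          Matrix.vecMul (fun i => (a i : ℝ)) (M : Matrix (Fin (n+1)) (Fin (n+1)) ℝ)
         euclidEnorm (fun i : Fin n => va i.castSucc) ≤ ε * va (Fin.last n)
           ∧ θ ≤ va (Fin.last n) ∧ va (Fin.last n) ≤ 1) →
        (let vb : Fin (n+1) → ℝ :=
          Matrix.vecMul (fun i => (b i : ℝ)) (M : Matrix (Fin (n+1)) (Fin (n+1)) ℝ)
         euclidEnorm (fun i : Fin n => vb i.castSucc) ≤ ε * vb (Fin.last n)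
           ∧ θ ≤ vb (Fin.last n) ∧ vb (Fin.last n) ≤ 1) →
        a = b := by
  classical
  -- A uniform bound on the entries of the adjugates of elements of C
  obtain ⟨K0, hK0⟩ : ∃ K0 : ℝ, ∀ c ∈ C, ∀ i j : Fin (n+1),
      |((c : Matrix (Fin (n+1)) (Fin (n+1)) ℝ).adjugate) i j| ≤ K0 := by
    have hcont : Continuous fun c : SL (n+1) ℝ =>
        (fun ij : Fin (n+1) × Fin (n+1) =>
          ((c : Matrix (Fin (n+1)) (Fin (n+1)) ℝ).adjugate) ij.1 ij.2) := by
      refine continuous_pi fun ij => ?_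
      exact ((continuous_induced_dom).matrix_adjugate).matrix_elem ij.1 ij.2
    obtain ⟨K0, hK0⟩ := hC.exists_bound_of_continuousOn hcont.continuousOn
    refine ⟨K0, fun c hc i j => ?_⟩
    have h1 := norm_le_pi_norm (fun ij : Fin (n+1) × Fin (n+1) =>
      ((c : Matrix (Fin (n+1)) (Fin (n+1)) ℝ).adjugate) ij.1 ij.2) (i, j)
    simpa [Real.norm_eq_abs] using h1.trans (hK0 c hc)
  set K : ℝ := max K0 1 with hKdef
  have hK1 : (1 : ℝ) ≤ K := le_max_right _ _
  have hK0' : (0:ℝ) < K := lt_of_lt_of_le one_pos hK1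
  have hK : ∀ c ∈ C, ∀ i j : Fin (n+1),
      |((c : Matrix (Fin (n+1)) (Fin (n+1)) ℝ).adjugate) i j| ≤ K :=
    fun c hc i j => (hK0 c hc i j).trans (le_max_left _ _)
  set D : ℝ := 8 * (n+1)^2 * K^2 with hDdef
  have hD1 : (8:ℝ) ≤ D := by
    have h2 : (1:ℝ) ≤ ((n:ℝ)+1)^2 := one_le_pow₀ (by linarith [Nat.cast_nonneg (α := ℝ) n])
    have h3 : (1:ℝ) ≤ K^2 := one_le_pow₀ hK1
    nlinarith
  have hDpos : (0:ℝ) < D := by linarith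
  refine ⟨θ / D, div_pos hθ hDpos, ?_⟩
  intro ε hε hεle M hM a b ha hb hAcone hBcone
  obtain ⟨γ, c, hcC, rfl⟩ := hM
  have hε1 : ε ≤ 1 := by
    have : θ / D ≤ 1 := by
      rw [div_le_one hDpos]; linarith
    linarith
  set A : Matrix (Fin (n+1)) (Fin (n+1)) ℝ := (c : Matrix (Fin (n+1)) (Fin (n+1)) ℝ) with hAdef
  have hAadj : A * A.adjugate = 1 := by
    rw [Matrix.mul_adjugate, c.prop, one_smul]
  set p : Fin (n+1) → ℤ := Matrix.vecMul a (γ : Matrix (Fin (n+1)) (Fin (n+1)) ℤ) with hpdef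
  set q : Fin (n+1) → ℤ := Matrix.vecMul b (γ : Matrix (Fin (n+1)) (Fin (n+1)) ℤ) with hqdef
  -- translation of the cone conditions
  have htrans : ∀ v : Fin (n+1) → ℤ,
      Matrix.vecMul (fun i => ((v i : ℤ) : ℝ))
        ((mapSL n γ * c : SL (n+1) ℝ) : Matrix (Fin (n+1)) (Fin (n+1)) ℝ)
      = Matrix.vecMul
          (fun i => ((Matrix.vecMul v (γ : Matrix (Fin (n+1)) (Fin (n+1)) ℤ)) i : ℝ)) A := by
    intro v
    rw [Matrix.SpecialLinearGroup.coe_mul, ← Matrix.vecMul_vecMul]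
    have h1 : ((mapSL n γ : SL (n+1) ℝ) : Matrix (Fin (n+1)) (Fin (n+1)) ℝ)
        = (γ : Matrix (Fin (n+1)) (Fin (n+1)) ℤ).map ⇑(Int.castRingHom ℝ) := rfl
    have h2 : (fun i => ((Matrix.vecMul v (γ : Matrix (Fin (n+1)) (Fin (n+1)) ℤ)) i : ℝ))
        = Matrix.vecMul (fun i => ((v i : ℤ) : ℝ))
            ((γ : Matrix (Fin (n+1)) (Fin (n+1)) ℤ).map ⇑(Int.castRingHom ℝ)) := by
      funext i
      exact RingHom.map_vecMul (Int.castRingHom ℝ) _ v i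
    rw [h1, h2]
  set pR : Fin (n+1) → ℝ := fun i => ((p i : ℤ) : ℝ) with hpRdef
  set qR : Fin (n+1) → ℝ := fun i => ((q i : ℤ) : ℝ) with hqRdef
  set x : Fin (n+1) → ℝ := Matrix.vecMul pR A with hxdef
  set y : Fin (n+1) → ℝ := Matrix.vecMul qR A with hydef
  obtain ⟨ha1, ha2, ha3⟩ := hAcone
  obtain ⟨hb1, hb2, hb3⟩ := hBcone
  rw [htrans a] at ha1 ha2 ha3
  rw [htrans b] at hb1 hb2 hb3
  -- now ha1 : enorm (fun i => x i.castSucc) ≤ ε * x (last n), etc.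
  set α : ℝ := x (Fin.last n) with hαdef
  set β : ℝ := y (Fin.last n) with hβdef
  have hα0 : 0 < α := lt_of_lt_of_le hθ ha2
  have hβ0 : 0 < β := lt_of_lt_of_le hθ hb2
  have hxj : ∀ j : Fin n, |x j.castSucc| ≤ ε * α :=
    fun j => (enorm_coord _ j).trans ha1
  have hyj : ∀ j : Fin n, |y j.castSucc| ≤ ε * β :=
    fun j => (enorm_coord _ j).trans hb1
  have hxall : ∀ j, |x j| ≤ 1 := by
    intro j
    rcases eq_or_ne j (Fin.last n) with rfl | hj
    · rw [abs_of_pos hα0]; exact ha3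
    · obtain ⟨j', rfl⟩ := Fin.exists_castSucc_eq.mpr hj
      calc |x j'.castSucc| ≤ ε * α := hxj j'
        _ ≤ 1 * 1 := by
            apply mul_le_mul hε1 ha3 (le_of_lt hα0) zero_le_one
        _ = 1 := one_mul 1
  have hyall : ∀ j, |y j| ≤ 1 := by
    intro j
    rcases eq_or_ne j (Fin.last n) with rfl | hj
    · rw [abs_of_pos hβ0]; exact hb3
    · obtain ⟨j', rfl⟩ := Fin.exists_castSucc_eq.mpr hj
      calc |y j'.castSucc| ≤ ε * β := hyj j'
        _ ≤ 1 * 1 := by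
            apply mul_le_mul hε1 hb3 (le_of_lt hβ0) zero_le_one
        _ = 1 := one_mul 1
  -- recover pR and qR from x, y
  have hpx : ∀ i, pR i = ∑ j, x j * A.adjugate j i := by
    have h1 : Matrix.vecMul x A.adjugate = pR := by
      rw [hxdef, Matrix.vecMul_vecMul, hAadj, Matrix.vecMul_one]
    intro i
    rw [← h1]
    simp [Matrix.vecMul, dotProduct]
  have hqy : ∀ i, qR i = ∑ j, y j * A.adjugate j i := by
    have h1 : Matrix.vecMul y A.adjugate = qR := by
      rw [hydef, Matrix.vecMul_vecMul, hAadj, Matrix.vecMul_one]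
    intro i
    rw [← h1]
    simp [Matrix.vecMul, dotProduct]
  have hcard : (Finset.univ : Finset (Fin (n+1))).card = n + 1 := Finset.card_fin _
  have hpbound : ∀ i, |pR i| ≤ ((n:ℝ)+1) * K := by
    intro i
    rw [hpx i]
    calc |∑ j, x j * A.adjugate j i| ≤ ∑ j, |x j * A.adjugate j i| :=
          Finset.abs_sum_le_sum_abs _ _
      _ ≤ ∑ _j : Fin (n+1), 1 * K := by
          refine Finset.sum_le_sum fun j _ => ?_
          rw [abs_mul]
          exact mul_le_mul (hxall j) (hK c hcC j i) (abs_nonneg _) zero_le_one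
      _ = ((n:ℝ)+1) * K := by
          rw [Finset.sum_const, hcard, nsmul_eq_mul]; push_cast; ring
  have hqbound : ∀ i, |qR i| ≤ ((n:ℝ)+1) * K := by
    intro i
    rw [hqy i]
    calc |∑ j, y j * A.adjugate j i| ≤ ∑ j, |y j * A.adjugate j i| :=
          Finset.abs_sum_le_sum_abs _ _
      _ ≤ ∑ _j : Fin (n+1), 1 * K := by
          refine Finset.sum_le_sum fun j _ => ?_
          rw [abs_mul]
          exact mul_le_mul (hyall j) (hK c hcC j i) (abs_nonneg _) zero_le_one
      _ = ((n:ℝ)+1) * K := by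
          rw [Finset.sum_const, hcard, nsmul_eq_mul]; push_cast; ring
  -- the vector u = β x - α y has last coordinate 0 and small other coordinates
  set u : Fin (n+1) → ℝ := fun j => β * x j - α * y j with hudef
  have hulast : u (Fin.last n) = 0 := by simp [hudef, ← hαdef, ← hβdef]; ring
  have huall : ∀ j, |u j| ≤ 2 * ε := by
    intro j
    rcases eq_or_ne j (Fin.last n) with rfl | hj
    · rw [hulast, abs_zero]; positivity
    · obtain ⟨j', rfl⟩ := Fin.exists_castSucc_eq.mpr hj
      have h1 : |u j'.castSucc| ≤ |β * x j'.castSucc| + |α * y j'.castSucc| := abs_sub _ _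
      have h2 : |β * x j'.castSucc| ≤ 1 * (ε * α) := by
        rw [abs_mul, abs_of_pos hβ0]
        exact mul_le_mul hb3 (hxj j') (abs_nonneg _) zero_le_one
      have h3 : |α * y j'.castSucc| ≤ 1 * (ε * β) := by
        rw [abs_mul, abs_of_pos hα0]
        exact mul_le_mul ha3 (hyj j') (abs_nonneg _) zero_le_one
      have hα1 : α ≤ 1 := ha3
      have hβ1 : β ≤ 1 := hb3
      nlinarith
  -- bound on w i = β pR i - α qR i
  have hw : ∀ i, |β * pR i - α * qR i| ≤ 2 * ((n:ℝ)+1) * ε * K := by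
    intro i
    have h1 : β * pR i - α * qR i = ∑ j, u j * A.adjugate j i := by
      rw [hpx i, hqy i, Finset.mul_sum, Finset.mul_sum, ← Finset.sum_sub_distrib]
      refine Finset.sum_congr rfl fun j _ => ?_
      rw [hudef]; ring
    rw [h1]
    calc |∑ j, u j * A.adjugate j i| ≤ ∑ j, |u j * A.adjugate j i| :=
          Finset.abs_sum_le_sum_abs _ _
      _ ≤ ∑ _j : Fin (n+1), (2 * ε) * K := by
          refine Finset.sum_le_sum fun j _ => ?_
          rw [abs_mul]
          exact mul_le_mul (huall j) (hK c hcC j i) (abs_nonneg _) (by positivity)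
      _ = 2 * ((n:ℝ)+1) * ε * K := by
          rw [Finset.sum_const, hcard, nsmul_eq_mul]; push_cast; ring
  -- all 2x2 minors of (p, q) vanish
  have hminor : ∀ i j, p i * q j = p j * q i := by
    intro i j
    have hB : |β * (pR i * qR j - pR j * qR i)| ≤
        2 * (2 * ((n:ℝ)+1) * ε * K) * (((n:ℝ)+1) * K) := by
      have heq : β * (pR i * qR j - pR j * qR i)
          = (β * pR i - α * qR i) * qR j - (β * pR j - α * qR j) * qR i := by ring
      rw [heq]
      have h1 := abs_sub ((β * pR i - α * qR i) * qR j) ((β * pR j - α * qR j) * qR i)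
      have h2 : |(β * pR i - α * qR i) * qR j| ≤ (2 * ((n:ℝ)+1) * ε * K) * (((n:ℝ)+1) * K) := by
        rw [abs_mul]
        exact mul_le_mul (hw i) (hqbound j) (abs_nonneg _) (by positivity)
      have h3 : |(β * pR j - α * qR j) * qR i| ≤ (2 * ((n:ℝ)+1) * ε * K) * (((n:ℝ)+1) * K) := by
        rw [abs_mul]
        exact mul_le_mul (hw j) (hqbound i) (abs_nonneg _) (by positivity)
      linarith
    -- the bound is < β, hence the minor has absolute value < 1
    have hlt : 2 * (2 * ((n:ℝ)+1) * ε * K) * (((n:ℝ)+1) * K) < β := by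
      have hεD : ε * D ≤ θ := by
        have := (le_div_iff₀ hDpos).mp hεle
        linarith
      have hhalf : 2 * (2 * ((n:ℝ)+1) * ε * K) * (((n:ℝ)+1) * K) = (ε * D) / 2 := by
        rw [hDdef]; push_cast; ring
      rw [hhalf]
      have : (ε * D) / 2 ≤ θ / 2 := by linarith
      linarith
    have habs : |pR i * qR j - pR j * qR i| < 1 := by
      have h4 : β * |pR i * qR j - pR j * qR i| < β * 1 := by
        rw [mul_one]
        calc β * |pR i * qR j - pR j * qR i| = |β * (pR i * qR j - pR j * qR i)| := by
              rw [abs_mul, abs_of_pos hβ0]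
          _ ≤ 2 * (2 * ((n:ℝ)+1) * ε * K) * (((n:ℝ)+1) * K) := hB
          _ < β := hlt
      exact lt_of_mul_lt_mul_left h4 (le_of_lt hβ0)
    have hcast : pR i * qR j - pR j * qR i = ((p i * q j - p j * q i : ℤ) : ℝ) := by
      rw [hpRdef, hqRdef]; push_cast; ring
    rw [hcast] at habs
    have : |p i * q j - p j * q i| < 1 := by exact_mod_cast habs
    have := Int.abs_lt_one_iff.mp this
    linarith [this]
  -- p and q are primitive
  have hp : Primitive p := primitive_vecMul γ ha
  have hq : Primitive q := primitive_vecMul γ hb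
  -- pick a nonzero coordinate of q
  obtain ⟨j₀, hj₀⟩ : ∃ j₀, q j₀ ≠ 0 := by
    by_contra h
    push_neg at h
    have : Finset.univ.gcd q = 0 := Finset.gcd_eq_zero_iff.mpr fun i _ => h i
    rw [hq] at this
    norm_num at this
  -- compare gcds to get |p j₀| = |q j₀|
  have hnorm : normalize (q j₀) = normalize (p j₀) := by
    calc normalize (q j₀) = normalize (q j₀) * Finset.univ.gcd p := by
          rw [hp, mul_one]
      _ = Finset.univ.gcd (fun i => q j₀ * p i) := Finset.gcd_mul_left.symm
      _ = Finset.univ.gcd (fun i => p j₀ * q i) := by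
          refine Finset.gcd_congr rfl fun i _ => ?_
          rw [mul_comm, hminor i j₀]
      _ = normalize (p j₀) * Finset.univ.gcd q := Finset.gcd_mul_left
      _ = normalize (p j₀) := by rw [hq, mul_one]
  have hassoc : q j₀ = p j₀ ∨ q j₀ = -(p j₀) := by
    have h1 := normalize_eq_normalize_iff.mp hnorm
    exact Int.associated_iff.mp (associated_of_dvd_dvd h1.1 h1.2)
  have hpq : p = q ∨ p = fun i => -(q i) := by
    rcases hassoc with h1 | h1
    · left
      funext i
      have h2 : p i * q j₀ = q i * q j₀ := by rw [hminor i j₀, h1]; ring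
      exact mul_right_cancel₀ hj₀ h2
    · right
      funext i
      have h2 : p i * q j₀ = (-(q i)) * q j₀ := by rw [hminor i j₀, h1]; ring
      exact mul_right_cancel₀ hj₀ h2
  rcases hpq with hpq | hpq
  · -- p = q implies a = b
    have h1 := vecMul_gamma_cancel γ a
    have h2 := vecMul_gamma_cancel γ b
    rw [← hpdef] at h1
    rw [← hqdef] at h2
    rw [← h1, ← h2, hpq]
  · -- p = -q contradicts positivity of last coordinates
    exfalso
    have hxy : α = -β := by
      have h1 : pR = fun i => -(qR i) := by
        funext i
        rw [hpRdef, hqRdef]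
        simp [hpq]
      have h2 : x = fun j => -(y j) := by
        rw [hxdef, hydef, h1]
        funext j
        simp [Matrix.vecMul, dotProduct, Finset.sum_neg_distrib, neg_mul]
      rw [hαdef, hβdef, h2]
    linarith
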